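/- arXiv:1107.3090 — 4 statements merged into one kernel-verified Lean document; each statement's English description precedes it below -/
import Mathlib

section
/- Motzkin–Straus theorem (independent set form): for an undirected graph G with adjacency matrix A (symmetric 0-1 matrix, zero diagonal) on n vertices, the minimum of yᵀ(A + I)y over probability vectors y in the standard simplex equals 1/α(G), where α(G) is the size of a maximum independent set of G. -/
open Matrix Finset

section aux
variable {n : ℕ} (M : Matrix (Fin n) (Fin n) ℝ)

/-- symmetry of the bilinear form -/
lemma MS_symm (hsymm : M.IsSymm) (y d : Fin n → ℝ) :
    y ⬝ᵥ M.mulVec d = d ⬝ᵥ M.mulVec y := by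
  rw [dotProduct_mulVec, ← mulVec_transpose, hsymm.eq, dotProduct_comm]

lemma MS_expand (hsymm : M.IsSymm) (y d : Fin n → ℝ) (t : ℝ) :
    (y + t • d) ⬝ᵥ M.mulVec (y + t • d)
      = y ⬝ᵥ M.mulVec y + 2 * t * (d ⬝ᵥ M.mulVec y) + t ^ 2 * (d ⬝ᵥ M.mulVec d) := by
  simp only [mulVec_add, mulVec_smul, dotProduct_add, add_dotProduct,
    dotProduct_smul, smul_dotProduct, smul_eq_mul, smul_smul]
  rw [MS_symm M hsymm y d]
  ring

end aux

lemma MS_lower {n : ℕ} (M : Matrix (Fin n) (Fin n) ℝ) (hsymm : M.IsSymm)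
    (hdiag : ∀ i, M i i = 1) (h01 : ∀ i j, i ≠ j → M i j = 0 ∨ M i j = 1)
    (α : ℕ) (hαpos : 0 < α)
    (hub : ∀ s : Finset (Fin n), (∀ i ∈ s, ∀ j ∈ s, i ≠ j → M i j = 0) → s.card ≤ α) :
    ∀ y ∈ stdSimplex ℝ (Fin n), 1 / (α : ℝ) ≤ y ⬝ᵥ M.mulVec y := by
  suffices H : ∀ k : ℕ, ∀ y ∈ stdSimplex ℝ (Fin n),
      (univ.filter (fun i => y i ≠ 0)).card ≤ k → 1 / (α : ℝ) ≤ y ⬝ᵥ M.mulVec y by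
    intro y hy
    exact H _ y hy le_rfl
  intro k
  induction k with
  | zero =>
      intro y hy hcard
      exfalso
      have h0 : ∀ i, y i = 0 := by
        intro i
        by_contra h
        have : i ∈ univ.filter (fun i => y i ≠ 0) := by simp [h]
        have := Finset.card_pos.mpr ⟨i, this⟩
        omega
      have := hy.2
      simp [h0] at this
  | succ k ih =>
      intro y hy hcard
      set S := univ.filter (fun i => y i ≠ 0) with hS
      by_cases hind : ∀ i ∈ S, ∀ j ∈ S, i ≠ j → M i j = 0
      · -- support is independent
        have hfy : y ⬝ᵥ M.mulVec y = ∑ i, y i ^ 2 := by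
          unfold dotProduct mulVec dotProduct
          refine Finset.sum_congr rfl fun i _ => ?_
          by_cases hyi : y i = 0
          · simp [hyi]
          · have hiS : i ∈ S := by simp [hS, hyi]
            have h1 : ∑ j, M i j * y j = M i i * y i := by
              refine Finset.sum_eq_single_of_mem i (Finset.mem_univ i) ?_
              intro j _ hj
              by_cases hyj : y j = 0
              · simp [hyj]
              · have hjS : j ∈ S := by simp [hS, hyj]
                rw [hind i hiS j hjS (Ne.symm hj), zero_mul]
            rw [h1, hdiag]; ring
        have hSsum : ∑ i ∈ S, y i = 1 := by
          have h2 := Finset.sum_subset (f := y)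
            (Finset.filter_subset (fun i => y i ≠ 0) univ)
            (fun x _ hx => by simpa using hx)
          rw [hS, h2, hy.2]
        have hCS : (1 : ℝ) ≤ S.card * ∑ i ∈ S, y i ^ 2 := by
          have := sq_sum_le_card_mul_sum_sq (s := S) (f := y)
          rwa [hSsum, one_pow] at this
        have hsq : ∑ i ∈ S, y i ^ 2 = ∑ i, y i ^ 2 := by
          refine Finset.sum_subset (f := fun i => y i ^ 2)
            (Finset.filter_subset _ _) ?_
          intro x _ hx
          have : y x = 0 := by simpa [hS] using hx
          simp [this]
        have hcardα : (S.card : ℝ) ≤ α := by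
          exact_mod_cast hub S hind
        have hsum_nonneg : 0 ≤ ∑ i, y i ^ 2 := by positivity
        have h1 : (1 : ℝ) ≤ α * ∑ i, y i ^ 2 := by
          calc (1:ℝ) ≤ S.card * ∑ i ∈ S, y i ^ 2 := hCS
          _ = S.card * ∑ i, y i ^ 2 := by rw [hsq]
          _ ≤ α * ∑ i, y i ^ 2 := by
              apply mul_le_mul_of_nonneg_right hcardα hsum_nonneg
        rw [hfy, div_le_iff₀ (by exact_mod_cast hαpos)]
        linarith [h1]
      · -- there is an edge in the support
        push_neg at hind
        obtain ⟨i, hiS, j, hjS, hij, hMij⟩ := hind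
        have hMij1 : M i j = 1 := (h01 i j hij).resolve_left hMij
        have hMji1 : M j i = 1 := by
          have := congrFun (congrFun hsymm.eq j) i
          simpa [Matrix.transpose_apply, hMij1] using this.symm
        have hyi : y i ≠ 0 := by simpa [hS] using hiS
        have hyj : y j ≠ 0 := by simpa [hS] using hjS
        have hyi' : 0 < y i := lt_of_le_of_ne (hy.1 i) (Ne.symm hyi)
        have hyj' : 0 < y j := lt_of_le_of_ne (hy.1 j) (Ne.symm hyj)
        -- helper: given orientation with c ≤ 0, shift mass from b to a
        have key : ∀ a b : Fin n, a ≠ b → M a b = 1 → M b a = 1 → 0 < y a → 0 < y b →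
            (M.mulVec y) a - (M.mulVec y) b ≤ 0 → 1 / (α : ℝ) ≤ y ⬝ᵥ M.mulVec y := by
          intro a b hab hMab hMba hya hyb hc
          set d : Fin n → ℝ := Pi.single a 1 - Pi.single b 1 with hd
          set y' : Fin n → ℝ := y + (y b) • d with hy'
          have hdval : ∀ w : Fin n → ℝ, d ⬝ᵥ w = w a - w b := by
            intro w
            simp [hd, sub_dotProduct, single_dotProduct]
          have hMd : d ⬝ᵥ M.mulVec d = 0 := by
            rw [hdval]
            simp [hd, mulVec_sub, mulVec_single, hdiag, hMab, hMba]
          have hfy' : y' ⬝ᵥ M.mulVec y' = y ⬝ᵥ M.mulVec y + 2 * y b * ((M.mulVec y) a - (M.mulVec y) b) := by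
            rw [hy', MS_expand M hsymm, hMd, hdval]
            ring
          have hle : y' ⬝ᵥ M.mulVec y' ≤ y ⬝ᵥ M.mulVec y := by
            rw [hfy']
            nlinarith
          have hy'b : y' b = 0 := by
            simp [hy', hd, Pi.single_apply, hab, Ne.symm hab]
          have hy'mem : y' ∈ stdSimplex ℝ (Fin n) := by
            constructor
            · intro x
              by_cases hxa : x = a
              · subst hxa
                have hxx : y' x = y x + y b := by
                  simp [hy', hd, Pi.single_apply, hab]
                rw [hxx]
                linarith
              · by_cases hxb : x = b
                · subst hxb; rw [hy'b]
                · have : y' x = y x := by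
                    simp [hy', hd, Pi.single_apply, hxa, hxb]
                  rw [this]; exact hy.1 x
            · have : ∑ x, y' x = ∑ x, y x + y b * (∑ x, d x) := by
                simp [hy', Finset.sum_add_distrib, Finset.mul_sum]
              rw [this]
              have hdsum : ∑ x, d x = 0 := by
                simp [hd, Finset.sum_sub_distrib, Pi.single_apply]
              rw [hdsum, mul_zero, add_zero, hy.2]
          have hsub : (univ.filter (fun x => y' x ≠ 0)) ⊆ S.erase b := by
            intro x hx
            simp only [Finset.mem_filter, Finset.mem_univ, true_and] at hx
            rw [Finset.mem_erase]
            constructor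
            · intro h; subst h; exact hx hy'b
            · by_cases hxa : x = a
              · subst hxa; simp [hS, ne_of_gt hya]
              · by_cases hxb : x = b
                · exact absurd (hxb ▸ hy'b) hx
                · have : y' x = y x := by
                    simp [hy', hd, Pi.single_apply, hxa, hxb]
                  rw [this] at hx
                  simp [hS, hx]
          have hbS : b ∈ S := by simp [hS, ne_of_gt hyb]
          have hcard' : (univ.filter (fun x => y' x ≠ 0)).card ≤ k := by
            have h1 := Finset.card_le_card hsub
            have h2 := Finset.card_erase_of_mem hbS
            omega
          exact le_trans (ih y' hy'mem hcard') hle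
        rcases le_or_gt ((M.mulVec y) i - (M.mulVec y) j) 0 with hc | hc
        · exact key i j hij hMij1 hMji1 hyi' hyj' hc
        · exact key j i (Ne.symm hij) hMji1 hMij1 hyj' hyi' (by linarith)

/-- Motzkin–Straus theorem (independent set form):
min over the simplex of yᵀ(A+I)y equals 1/α(G). -/
theorem motzkin_straus {n : ℕ} (hn : 0 < n)
    (A : Matrix (Fin n) (Fin n) ℝ) (hsymm : A.IsSymm)
    (h01 : ∀ i j, A i j = 0 ∨ A i j = 1) (hdiag : ∀ i, A i i = 0)
    (α : ℕ)
    (hα : IsGreatest {m : ℕ | ∃ s : Finset (Fin n),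
        (∀ i ∈ s, ∀ j ∈ s, i ≠ j → A i j = 0) ∧ s.card = m} α) :
    IsLeast {v : ℝ | ∃ y : Fin n → ℝ, y ∈ stdSimplex ℝ (Fin n) ∧
        v = y ⬝ᵥ (A + 1).mulVec y} (1 / α) := by
  set M := A + 1 with hM
  have hMdiag : ∀ i, M i i = 1 := by
    intro i
    simp [hM, Matrix.add_apply, Matrix.one_apply, hdiag]
  have hMoff : ∀ i j, i ≠ j → M i j = A i j := by
    intro i j h
    simp [hM, Matrix.add_apply, Matrix.one_apply, h]
  have hMsymm : M.IsSymm := by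
    rw [hM]
    exact Matrix.IsSymm.add hsymm (Matrix.isSymm_one)
  -- α ≥ 1
  obtain ⟨s, hsind, hscard⟩ := hα.1
  have hαpos : 0 < α := by
    have : 1 ∈ {m : ℕ | ∃ s : Finset (Fin n),
        (∀ i ∈ s, ∀ j ∈ s, i ≠ j → A i j = 0) ∧ s.card = m} := by
      obtain ⟨i⟩ := Fin.pos_iff_nonempty.mp hn
      exact ⟨{i}, by simp, by simp⟩
    have := hα.2 this
    omega
  have hαR : (0:ℝ) < α := by exact_mod_cast hαpos
  constructor
  · -- membership: uniform vector on s
    refine ⟨fun k => if k ∈ s then 1 / (α:ℝ) else 0, ⟨?_, ?_⟩, ?_⟩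
    · intro x; dsimp only; split <;> positivity
    · rw [Finset.sum_ite_mem, Finset.univ_inter, Finset.sum_const, hscard,
        nsmul_eq_mul]
      field_simp
    · unfold dotProduct mulVec dotProduct
      have hterm : ∀ i, (if i ∈ s then 1/(α:ℝ) else 0) * (∑ j, M i j * (if j ∈ s then 1/(α:ℝ) else 0))
          = if i ∈ s then 1/(α:ℝ)^2 else 0 := by
        intro i
        by_cases his : i ∈ s
        · rw [if_pos his, if_pos his]
          have : ∑ j, M i j * (if j ∈ s then 1/(α:ℝ) else 0) = 1/(α:ℝ) := by
            rw [Finset.sum_congr rfl (fun j _ => by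
              rw [mul_ite, mul_zero, mul_one_div])]
            rw [Finset.sum_ite_mem, Finset.univ_inter]
            rw [Finset.sum_eq_single i]
            · rw [hMdiag]
            · intro j hjs hji
              rw [hMoff i j (Ne.symm hji), hsind i his j hjs (Ne.symm hji), zero_div]
            · intro h; exact absurd his h
          rw [this]
          field_simp
        · rw [if_neg his, if_neg his, zero_mul]
      rw [Finset.sum_congr rfl (fun i _ => hterm i), Finset.sum_ite_mem,
        Finset.univ_inter, Finset.sum_const, hscard, nsmul_eq_mul]
      field_simp
  · -- lower bound
    rintro v ⟨y, hy, rfl⟩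
    refine MS_lower M hMsymm hMdiag ?_ α hαpos ?_ y hy
    · intro i j h
      rw [hMoff i j h]; exact h01 i j
    · intro t ht
      apply hα.2
      refine ⟨t, ?_, rfl⟩
      intro a ha b hb hab
      have := ht a ha b hb hab
      rwa [hMoff a b hab] at this
end

section
/- For an undirected graph G with adjacency matrix A, a positive integer j, and the quadratic form Q(y) = yᵀ(A+I)y on the simplex: there exists y in the simplex with Q(y) ≤ 1/j if and only if G has an independent set of size at least j. -/
open Matrix Finset

section Aux

variable {n : ℕ} (A : Matrix (Fin n) (Fin n) ℝ)

private lemma B_nonneg (h01 : ∀ i j, A i j = 0 ∨ A i j = 1) (i k : Fin n) :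
    0 ≤ (A + 1) i k := by
  rw [Matrix.add_apply, Matrix.one_apply]
  rcases h01 i k with h | h <;> rw [h] <;> split <;> norm_num

private lemma B_diag (hdiag : ∀ i, A i i = 0) (i : Fin n) : (A + 1) i i = 1 := by
  simp [Matrix.add_apply, Matrix.one_apply, hdiag i]

private lemma Q_expand (y : Fin n → ℝ) :
    y ⬝ᵥ (A + 1).mulVec y = ∑ i, ∑ k, y i * (A + 1) i k * y k := by
  simp [dotProduct, mulVec, Finset.mul_sum, mul_assoc, mul_comm, mul_left_comm]

/-- The shift step: if u,v are adjacent and both in the support, mass can be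
moved from v to u (when the gradient comparison is right) without increasing Q. -/
private lemma shift_step (hsymm : A.IsSymm) (hdiag : ∀ i, A i i = 0)
    {y : Fin n → ℝ} (hy : y ∈ stdSimplex ℝ (Fin n))
    {u v : Fin n} (huv : u ≠ v) (hyu : y u ≠ 0) (hAuv : A u v = 1)
    (hg : (A + 1).mulVec y u ≤ (A + 1).mulVec y v) :
    ∃ y' : Fin n → ℝ, y' ∈ stdSimplex ℝ (Fin n) ∧
      (Finset.univ.filter fun i => y' i ≠ 0) ⊆
        (Finset.univ.filter fun i => y i ≠ 0).erase v ∧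
      y' ⬝ᵥ (A + 1).mulVec y' ≤ y ⬝ᵥ (A + 1).mulVec y := by
  set B := A + 1 with hB
  have hBsymm : Bᵀ = B := by
    rw [hB, Matrix.transpose_add, hsymm, Matrix.transpose_one]
  set d : Fin n → ℝ := Pi.single u 1 - Pi.single v 1 with hd
  set y' : Fin n → ℝ := y + (y v) • d with hy'
  have hyv : 0 ≤ y v := hy.1 v
  have hdapp : ∀ i, d i = (if i = u then (1:ℝ) else 0) - (if i = v then 1 else 0) := by
    intro i; simp [hd, Pi.single_apply]
  have hy'app : ∀ i, y' i = y i + y v * ((if i = u then (1:ℝ) else 0) - (if i = v then 1 else 0)) := by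
    intro i; simp [hy', hdapp i]
  refine ⟨y', ⟨?_, ?_⟩, ?_, ?_⟩
  · -- nonneg
    intro i
    rw [hy'app i]
    rcases eq_or_ne i u with rfl | hu
    · rw [if_pos rfl, if_neg huv]
      have := hy.1 i; linarith
    · rw [if_neg hu]
      rcases eq_or_ne i v with rfl | hv
      · simp
      · rw [if_neg hv]; have := hy.1 i; linarith
  · -- sum = 1
    have hsum1 := hy.2
    simp only [hy'app]
    rw [Finset.sum_add_distrib, hsum1]
    have hzero : ∑ x : Fin n, y v * ((if x = u then (1:ℝ) else 0) - (if x = v then 1 else 0)) = 0 := by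
      simp [mul_sub, Finset.sum_sub_distrib, Finset.sum_ite_eq']
    rw [hzero, add_zero]
  · -- support shrinks
    intro i hi
    simp only [Finset.mem_filter, Finset.mem_univ, true_and] at hi
    rw [Finset.mem_erase]
    constructor
    · rintro rfl
      apply hi
      rw [hy'app i, if_neg huv.symm, if_pos rfl]
      ring
    · simp only [Finset.mem_filter, Finset.mem_univ, true_and]
      intro hyi
      rcases eq_or_ne i u with rfl | hu
      · exact absurd hyi hyu
      · apply hi
        rw [hy'app i, hyi, if_neg hu]
        rcases eq_or_ne i v with rfl | hv
        · rw [if_pos rfl, hyi]; ring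
        · rw [if_neg hv]; ring
  · -- Q does not increase
    have hdQ : ∀ w : Fin n → ℝ, d ⬝ᵥ w = w u - w v := by
      intro w
      simp only [dotProduct, hdapp, sub_mul, one_mul, zero_mul, ite_mul,
        Finset.sum_sub_distrib, Finset.sum_ite_eq', Finset.mem_univ, if_pos]
    have hsymmdot : ∀ w : Fin n → ℝ, w ⬝ᵥ B.mulVec d = d ⬝ᵥ B.mulVec w := by
      intro w
      rw [Matrix.dotProduct_mulVec, ← hBsymm, Matrix.vecMul_transpose, dotProduct_comm, hBsymm]
    have hBd : d ⬝ᵥ B.mulVec d = 0 := by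
      rw [hdQ]
      have hBdapp : ∀ i0, B.mulVec d i0 = B i0 u - B i0 v := by
        intro i0
        simp only [Matrix.mulVec, dotProduct, hdapp, mul_sub, mul_ite, mul_one, mul_zero,
          Finset.sum_sub_distrib, Finset.sum_ite_eq', Finset.mem_univ, if_pos]
      have h1 : B.mulVec d u = B u u - B u v := hBdapp u
      have h2 : B.mulVec d v = B v u - B v v := hBdapp v
      rw [h1, h2]
      have hBuu : B u u = 1 := B_diag A hdiag u
      have hBvv : B v v = 1 := B_diag A hdiag v
      have hBuv : B u v = 1 := by
        simp [hB, Matrix.add_apply, Matrix.one_apply_ne huv, hAuv]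
      have hBvu : B v u = 1 := by
        have : A v u = A u v := hsymm.apply u v
        simp [hB, Matrix.add_apply, Matrix.one_apply_ne huv.symm, this, hAuv]
      rw [hBuu, hBvv, hBuv, hBvu]; ring
    have key : y' ⬝ᵥ B.mulVec y' =
        y ⬝ᵥ B.mulVec y + 2 * y v * (B.mulVec y u - B.mulVec y v) := by
      rw [hy']
      rw [Matrix.mulVec_add, Matrix.mulVec_smul, add_dotProduct,
        dotProduct_add, dotProduct_add, smul_dotProduct,
        dotProduct_smul, dotProduct_smul, smul_dotProduct]
      rw [hsymmdot y, hdQ (B.mulVec y), hBd]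
      simp [smul_eq_mul]; ring
    rw [key]
    nlinarith [hyv, hg]

private lemma indep_lower_bound (h01 : ∀ i j, A i j = 0 ∨ A i j = 1)
    (hdiag : ∀ i, A i i = 0)
    {y : Fin n → ℝ} (hy : y ∈ stdSimplex ℝ (Fin n))
    (hind : ∀ i ∈ (Finset.univ.filter fun i => y i ≠ 0),
      ∀ k ∈ (Finset.univ.filter fun i => y i ≠ 0), i ≠ k → A i k = 0) :
    ∃ s : Finset (Fin n), (∀ i ∈ s, ∀ k ∈ s, i ≠ k → A i k = 0) ∧
      s.Nonempty ∧ ((s.card : ℝ))⁻¹ ≤ y ⬝ᵥ (A + 1).mulVec y := by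
  set S := (Finset.univ.filter fun i => y i ≠ 0) with hS
  have hSne : S.Nonempty := by
    rcases Finset.eq_empty_or_nonempty S with h | h
    · exfalso
      have : ∀ i, y i = 0 := by
        intro i
        by_contra hyi
        have : i ∈ S := by simp [hS, hyi]
        rw [h] at this; exact absurd this (Finset.notMem_empty i)
      have hsum := hy.2
      rw [Finset.sum_congr rfl (fun i _ => this i)] at hsum
      simp at hsum
    · exact h
  refine ⟨S, hind, hSne, ?_⟩
  -- Q y ≥ ∑ i in S, y i ^ 2
  have hsq : ∑ i ∈ S, y i ^ 2 ≤ y ⬝ᵥ (A + 1).mulVec y := by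
    rw [Q_expand]
    have hterm : ∀ i ∈ Finset.univ (α := Fin n),
        (if i ∈ S then y i ^ 2 else 0) ≤ ∑ k, y i * (A + 1) i k * y k := by
      intro i _
      have hpos : ∀ k ∈ Finset.univ (α := Fin n), 0 ≤ y i * (A + 1) i k * y k :=
        fun k _ => mul_nonneg (mul_nonneg (hy.1 i) (B_nonneg A h01 i k)) (hy.1 k)
      split
      · calc y i ^ 2 = y i * (A + 1) i i * y i := by rw [B_diag A hdiag]; ring
          _ ≤ ∑ k, y i * (A + 1) i k * y k :=
            Finset.single_le_sum hpos (Finset.mem_univ i)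
      · exact Finset.sum_nonneg hpos
    calc ∑ i ∈ S, y i ^ 2 = ∑ i, (if i ∈ S then y i ^ 2 else 0) := by
          rw [Finset.sum_ite_mem, Finset.univ_inter]
      _ ≤ ∑ i, ∑ k, y i * (A + 1) i k * y k := Finset.sum_le_sum hterm
  have hsum : ∑ i ∈ S, y i = 1 := by
    rw [← hy.2]
    apply Finset.sum_subset (Finset.subset_univ S)
    intro i _ hi
    simp [hS] at hi; exact hi
  have hcauchy : (1 : ℝ) ≤ S.card * ∑ i ∈ S, y i ^ 2 := by
    have := sq_sum_le_card_mul_sum_sq (s := S) (f := y)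
    rw [hsum] at this; simpa using this
  have hcard : (0 : ℝ) < S.card := by
    exact_mod_cast Finset.card_pos.mpr hSne
  have h4 : (1:ℝ) ≤ S.card * (y ⬝ᵥ (A + 1).mulVec y) :=
    le_trans hcauchy (mul_le_mul_of_nonneg_left hsq (le_of_lt hcard))
  have h5 : ((S.card : ℝ))⁻¹ * 1 ≤ ((S.card : ℝ))⁻¹ * ((S.card : ℝ) * (y ⬝ᵥ (A + 1).mulVec y)) :=
    mul_le_mul_of_nonneg_left h4 (inv_nonneg.mpr hcard.le)
  calc ((S.card : ℝ))⁻¹ = ((S.card : ℝ))⁻¹ * 1 := (mul_one _).symm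
    _ ≤ ((S.card : ℝ))⁻¹ * ((S.card : ℝ) * (y ⬝ᵥ (A + 1).mulVec y)) := h5
    _ = y ⬝ᵥ (A + 1).mulVec y := by
        rw [← mul_assoc, inv_mul_cancel₀ (ne_of_gt hcard), one_mul]

private lemma key_lemma (hsymm : A.IsSymm) (h01 : ∀ i j, A i j = 0 ∨ A i j = 1)
    (hdiag : ∀ i, A i i = 0) :
    ∀ m : ℕ, ∀ y : Fin n → ℝ, y ∈ stdSimplex ℝ (Fin n) →
      (Finset.univ.filter fun i => y i ≠ 0).card ≤ m →
      ∃ s : Finset (Fin n), (∀ i ∈ s, ∀ k ∈ s, i ≠ k → A i k = 0) ∧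
        s.Nonempty ∧ ((s.card : ℝ))⁻¹ ≤ y ⬝ᵥ (A + 1).mulVec y := by
  intro m
  induction m with
  | zero =>
    intro y hy hcard
    exfalso
    have hall : ∀ i, y i = 0 := by
      intro i
      by_contra hyi
      have : i ∈ (Finset.univ.filter fun i => y i ≠ 0) := by simp [hyi]
      have := Finset.card_pos.mpr ⟨i, this⟩
      omega
    have := hy.2
    rw [Finset.sum_congr rfl (fun i _ => hall i)] at this
    simp at this
  | succ m ih =>
    intro y hy hcard
    by_cases hind : ∀ i ∈ (Finset.univ.filter fun i => y i ≠ 0),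
        ∀ k ∈ (Finset.univ.filter fun i => y i ≠ 0), i ≠ k → A i k = 0
    · exact indep_lower_bound A h01 hdiag hy hind
    · push_neg at hind
      obtain ⟨u, hu, v, hv, huv, hAuv⟩ := hind
      have hAuv1 : A u v = 1 := (h01 u v).resolve_left hAuv
      have hAvu1 : A v u = 1 := by
        rw [hsymm.apply u v, hAuv1]
      simp only [Finset.mem_filter, Finset.mem_univ, true_and] at hu hv
      rcases le_total ((A + 1).mulVec y u) ((A + 1).mulVec y v) with hg | hg
      · obtain ⟨y', hy', hsupp, hQ⟩ := shift_step A hsymm hdiag hy huv hu hAuv1 hg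
        have hvS : v ∈ (Finset.univ.filter fun i => y i ≠ 0) := by simp [hv]
        have hcard' : (Finset.univ.filter fun i => y' i ≠ 0).card ≤ m := by
          have h1 := Finset.card_le_card hsupp
          rw [Finset.card_erase_of_mem hvS] at h1
          omega
        obtain ⟨s, hs1, hs2, hs3⟩ := ih y' hy' hcard'
        exact ⟨s, hs1, hs2, le_trans hs3 hQ⟩
      · obtain ⟨y', hy', hsupp, hQ⟩ := shift_step A hsymm hdiag hy huv.symm hv hAvu1 hg
        have huS : u ∈ (Finset.univ.filter fun i => y i ≠ 0) := by simp [hu]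
        have hcard' : (Finset.univ.filter fun i => y' i ≠ 0).card ≤ m := by
          have h1 := Finset.card_le_card hsupp
          rw [Finset.card_erase_of_mem huS] at h1
          omega
        obtain ⟨s, hs1, hs2, hs3⟩ := ih y' hy' hcard'
        exact ⟨s, hs1, hs2, le_trans hs3 hQ⟩

end Aux

/-- There is a simplex vector y with yᵀ(A+I)y ≤ 1/j iff G has an independent
set of size at least j. -/
theorem quadratic_iff_independent_set {n : ℕ} (hn : 0 < n)
    (A : Matrix (Fin n) (Fin n) ℝ) (hsymm : A.IsSymm)
    (h01 : ∀ i j, A i j = 0 ∨ A i j = 1) (hdiag : ∀ i, A i i = 0)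
    (j : ℕ) (hj : 0 < j) :
    (∃ y : Fin n → ℝ, y ∈ stdSimplex ℝ (Fin n) ∧
        y ⬝ᵥ (A + 1).mulVec y ≤ 1 / j)
      ↔ ∃ s : Finset (Fin n),
          (∀ i ∈ s, ∀ k ∈ s, i ≠ k → A i k = 0) ∧ j ≤ s.card := by
  constructor
  · rintro ⟨y, hy, hQ⟩
    obtain ⟨s, hs1, hs2, hs3⟩ := key_lemma A hsymm h01 hdiag
      (Finset.univ.filter fun i => y i ≠ 0).card y hy le_rfl
    refine ⟨s, hs1, ?_⟩
    have hcard : (0 : ℝ) < s.card := by exact_mod_cast Finset.card_pos.mpr hs2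
    have hjpos : (0 : ℝ) < j := by exact_mod_cast hj
    have h6 : ((s.card : ℝ))⁻¹ ≤ ((j : ℝ))⁻¹ :=
      le_trans hs3 (by rwa [one_div] at hQ)
    have h7 : (j : ℝ) ≤ s.card := (inv_le_inv₀ hcard hjpos).mp h6
    exact_mod_cast h7
  · rintro ⟨s, hs, hcard⟩
    have hsne : s.Nonempty := Finset.card_pos.mp (lt_of_lt_of_le hj hcard)
    have hcpos : (0 : ℝ) < s.card := by exact_mod_cast Finset.card_pos.mpr hsne
    set c : ℝ := (s.card : ℝ)⁻¹ with hc
    refine ⟨fun i => if i ∈ s then c else 0, ⟨?_, ?_⟩, ?_⟩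
    · intro i
      show (0:ℝ) ≤ if i ∈ s then c else 0
      by_cases hi : i ∈ s
      · rw [if_pos hi]; positivity
      · rw [if_neg hi]
    · rw [Finset.sum_ite_mem, Finset.univ_inter, Finset.sum_const, nsmul_eq_mul,
        hc, mul_inv_cancel₀ (ne_of_gt hcpos)]
    · rw [Q_expand]
      have hQeq : ∑ i, ∑ k, (if i ∈ s then c else 0) * (A + 1) i k *
          (if k ∈ s then c else 0) = ∑ i ∈ s, ∑ k ∈ s, c * (A + 1) i k * c := by
        rw [← Finset.sum_subset (Finset.subset_univ s)]
        · apply Finset.sum_congr rfl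
          intro i hi
          rw [← Finset.sum_subset (Finset.subset_univ s)]
          · apply Finset.sum_congr rfl
            intro k hk
            rw [if_pos hi, if_pos hk]
          · intro k _ hk; rw [if_neg hk]; ring
        · intro i _ hi
          rw [if_neg hi]
          apply Finset.sum_eq_zero; intro k _; ring
      rw [hQeq]
      have hinner : ∀ i ∈ s, ∑ k ∈ s, c * (A + 1) i k * c = c ^ 2 := by
        intro i hi
        rw [Finset.sum_eq_single i]
        · rw [B_diag A hdiag]; ring
        · intro k hk hki
          have : A i k = 0 := hs i hi k hk (Ne.symm hki)
          rw [Matrix.add_apply, Matrix.one_apply_ne (Ne.symm hki), this]; ring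
        · intro h; exact absurd hi h
      rw [Finset.sum_congr rfl hinner, Finset.sum_const, nsmul_eq_mul]
      have : (s.card : ℝ) * c ^ 2 = c := by
        rw [hc, sq, ← mul_assoc, mul_inv_cancel₀ (ne_of_gt hcpos), one_mul]
      rw [this, hc, one_div]
      apply inv_anti₀
      · exact_mod_cast hj
      · exact_mod_cast hcard
end

section
/- For positive integers c₁,…,cₙ and ε = n∑ᵢcᵢ − n > 0, the numbers πᵢ* = ((n+ε)√cᵢ/∑ⱼ√cⱼ − 1)/ε satisfy πᵢ* > 0 for all i and ∑ᵢ πᵢ* = 1. -/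
/-- The optimal controller π* in the SQRT-SUM reduction is positive and sums to 1. -/
theorem sqrtsum_optimal_controller {n : ℕ} (hn : 0 < n)
    (c : Fin n → ℕ) (hc : ∀ i, 0 < c i)
    (ε : ℝ) (hε : ε = n * (∑ i, (c i : ℝ)) - n) (hεpos : 0 < ε)
    (πstar : Fin n → ℝ)
    (hπ : ∀ i, πstar i
      = (((n : ℝ) + ε) * Real.sqrt (c i) / (∑ j, Real.sqrt (c j)) - 1) / ε) :
    (∀ i, 0 < πstar i) ∧ ∑ i, πstar i = 1 := by
  set S : ℝ := ∑ j, Real.sqrt (c j) with hSdef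
  have h1le : ∀ i : Fin n, (1 : ℝ) ≤ Real.sqrt (c i) := fun i => by
    rw [show (1:ℝ) = Real.sqrt 1 by simp]
    exact Real.sqrt_le_sqrt (by exact_mod_cast hc i)
  have hSn : (n : ℝ) ≤ S := by
    calc (n : ℝ) = ∑ _j : Fin n, (1:ℝ) := by simp
    _ ≤ S := Finset.sum_le_sum fun i _ => h1le i
  have hS1 : 1 < S := by
    rcases Nat.lt_or_ge n 2 with h | h
    · have hn1 : n = 1 := by omega
      subst hn1
      simp only [hSdef, Fin.sum_univ_one]
      have : (2:ℝ) ≤ (c 0 : ℝ) := by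
        have h1 : 1 < (c 0 : ℕ) := by
          by_contra hcon
          push_neg at hcon
          have hc1 : (c 0 : ℕ) = 1 := le_antisymm hcon (hc 0)
          rw [Fin.sum_univ_one, hc1] at hε
          norm_num at hε
          linarith
        exact_mod_cast h1
      calc (1:ℝ) < Real.sqrt 2 := by
            rw [show (1:ℝ) = Real.sqrt 1 by simp]
            exact Real.sqrt_lt_sqrt (by norm_num) (by norm_num)
      _ ≤ Real.sqrt (c 0) := Real.sqrt_le_sqrt this
    · calc (1:ℝ) < (n:ℝ) := by exact_mod_cast h
        _ ≤ S := hSn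
  have hSpos : 0 < S := by linarith
  have hCS : S ^ 2 ≤ (n : ℝ) + ε := by
    have := sq_sum_le_card_mul_sum_sq (s := Finset.univ) (f := fun j => Real.sqrt (c j))
    simp only [Finset.card_univ, Fintype.card_fin] at this
    calc S ^ 2 ≤ (n : ℝ) * ∑ j, Real.sqrt (c j) ^ 2 := this
    _ = (n : ℝ) * ∑ j, (c j : ℝ) := by
        congr 1; exact Finset.sum_congr rfl fun j _ => Real.sq_sqrt (by positivity)
    _ = (n : ℝ) + ε := by rw [hε]; ring
  constructor
  · intro i
    rw [hπ i]
    apply div_pos _ hεpos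
    have h1 : 1 < ((n : ℝ) + ε) * Real.sqrt (c i) / S := by
      rw [lt_div_iff₀ hSpos]
      nlinarith [h1le i, hCS, hS1]
    linarith
  · have hsum : ∑ i, (((n:ℝ) + ε) * Real.sqrt (c i) / S - 1) = ((n:ℝ) + ε) - n := by
      rw [Finset.sum_sub_distrib]
      have heq : ∑ i, ((n:ℝ) + ε) * Real.sqrt (c i) / S = ((n:ℝ) + ε) * S / S := by
        rw [← Finset.sum_div, ← Finset.mul_sum, ← hSdef]
      rw [heq, mul_div_assoc, div_self (ne_of_gt hSpos)]
      simp
    rw [Finset.sum_congr rfl fun i _ => hπ i, ← Finset.sum_div, hsum]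
    field_simp
    ring
end

section
/- Let A(π) = I − γ∑ₐ πₐPₐ where P₁,…,P_k are symmetric stochastic matrices and 0 ≤ γ < 1, and let μ ∈ ℝⁿ. Then the function f(π) = μᵀ A(π)⁻¹ μ is convex on the standard simplex. -/
open Matrix

lemma quad_key {n : ℕ} (A : Matrix (Fin n) (Fin n) ℝ) (hA : A.PosDef) (μ x : Fin n → ℝ) :
    2 * (x ⬝ᵥ μ) - x ⬝ᵥ A.mulVec x ≤ μ ⬝ᵥ A⁻¹.mulVec μ := by
  set y := A⁻¹.mulVec μ with hy
  have hdet : IsUnit A.det := hA.det_pos.ne'.isUnit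
  have hAy : A.mulVec y = μ := by
    rw [hy, mulVec_mulVec, Matrix.mul_nonsing_inv _ hdet, one_mulVec]
  have hsym : ∀ u v : Fin n → ℝ, u ⬝ᵥ A.mulVec v = v ⬝ᵥ A.mulVec u := by
    intro u v
    have ht : Aᵀ = A := hA.1
    rw [dotProduct_mulVec, ← mulVec_transpose, ht, dotProduct_comm]
  have h0 : 0 ≤ (x - y) ⬝ᵥ A.mulVec (x - y) := by
    have := hA.posSemidef.dotProduct_mulVec_nonneg (x - y); simpa using this
  have hexp : (x - y) ⬝ᵥ A.mulVec (x - y)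
      = x ⬝ᵥ A.mulVec x - 2 * (x ⬝ᵥ μ) + μ ⬝ᵥ y := by
    have h1 : y ⬝ᵥ A.mulVec x = x ⬝ᵥ μ := by rw [← hsym, hAy, dotProduct_comm]
    have h2 : x ⬝ᵥ A.mulVec y = x ⬝ᵥ μ := by rw [hAy]
    have h3 : y ⬝ᵥ A.mulVec y = μ ⬝ᵥ y := by rw [hAy, dotProduct_comm]
    rw [sub_dotProduct, mulVec_sub, dotProduct_sub, dotProduct_sub, h1, h2, h3]
    ring
  linarith

lemma pd_key {n k : ℕ} (P : Fin k → Matrix (Fin n) (Fin n) ℝ)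
    (hsymm : ∀ a, (P a).IsSymm)
    (hnonneg : ∀ a i j, 0 ≤ P a i j) (hrow : ∀ a i, ∑ j, P a i j = 1)
    (γ : ℝ) (hγ0 : 0 ≤ γ) (hγ1 : γ < 1) (π : Fin k → ℝ)
    (hπ : π ∈ stdSimplex ℝ (Fin k)) :
    (1 - γ • ∑ a, π a • P a : Matrix (Fin n) (Fin n) ℝ).PosDef := by
  set N : Matrix (Fin n) (Fin n) ℝ := ∑ a, π a • P a with hN
  have hNentry : ∀ i j, N i j = ∑ a, π a * P a i j := by
    intro i j; rw [hN]; simp [Matrix.sum_apply]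
  have hNnn : ∀ i j, 0 ≤ N i j := by
    intro i j; rw [hNentry]
    exact Finset.sum_nonneg fun a _ => mul_nonneg (hπ.1 a) (hnonneg a i j)
  have hNsymm : ∀ i j, N i j = N j i := by
    intro i j; rw [hNentry, hNentry]
    exact Finset.sum_congr rfl fun a _ => by rw [(hsymm a).apply i j]
  have hNrow : ∀ i, ∑ j, N i j = 1 := by
    intro i
    calc ∑ j, N i j = ∑ j, ∑ a, π a * P a i j :=
          Finset.sum_congr rfl fun j _ => hNentry i j
      _ = ∑ a, ∑ j, π a * P a i j := Finset.sum_comm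
      _ = ∑ a, π a * ∑ j, P a i j := by
          exact Finset.sum_congr rfl fun a _ => (Finset.mul_sum _ _ _).symm
      _ = 1 := by simp only [hrow, mul_one]; exact hπ.2
  have hcol : ∀ j, ∑ i, N i j = 1 := by
    intro j
    rw [Finset.sum_congr rfl fun i _ => hNsymm i j]
    exact hNrow j
  refine Matrix.PosDef.of_dotProduct_mulVec_pos ?_ ?_
  · rw [Matrix.IsHermitian, conjTranspose_eq_transpose_of_trivial]
    ext i j
    simp [Matrix.transpose_apply, Matrix.one_apply, hNsymm j i, eq_comm]
  · intro x hx
    have hxx : 0 < x ⬝ᵥ x := by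
      refine lt_of_le_of_ne (Finset.sum_nonneg fun i _ => mul_self_nonneg _) ?_
      exact Ne.symm (mt dotProduct_self_eq_zero.mp hx)
    have hquad : x ⬝ᵥ N.mulVec x ≤ x ⬝ᵥ x := by
      have hexp : x ⬝ᵥ N.mulVec x = ∑ i, ∑ j, N i j * (x i * x j) := by
        simp [dotProduct, mulVec, Finset.mul_sum, mul_comm, mul_assoc, mul_left_comm]
      rw [hexp]
      have step1 : ∑ i, ∑ j, N i j * (x i * x j)
          ≤ ∑ i, ∑ j, N i j * ((x i ^ 2 + x j ^ 2) / 2) := by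
        refine Finset.sum_le_sum fun i _ => Finset.sum_le_sum fun j _ => ?_
        exact mul_le_mul_of_nonneg_left (by nlinarith [sq_nonneg (x i - x j)]) (hNnn i j)
      have step2 : ∑ i, ∑ j, N i j * ((x i ^ 2 + x j ^ 2) / 2) = x ⬝ᵥ x := by
        have h1 : ∀ i j : Fin n, N i j * ((x i ^ 2 + x j ^ 2) / 2)
            = N i j * (x i ^ 2 / 2) + N i j * (x j ^ 2 / 2) := fun i j => by ring
        simp_rw [h1, Finset.sum_add_distrib]
        have hA : ∑ i, ∑ j, N i j * (x i ^ 2 / 2) = ∑ i, x i ^ 2 / 2 := by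
          refine Finset.sum_congr rfl fun i _ => ?_
          rw [← Finset.sum_mul, hNrow i, one_mul]
        have hB : ∑ i, ∑ j, N i j * (x j ^ 2 / 2) = ∑ j, x j ^ 2 / 2 := by
          rw [Finset.sum_comm]
          refine Finset.sum_congr rfl fun j _ => ?_
          rw [← Finset.sum_mul, hcol j, one_mul]
        rw [hA, hB, dotProduct, ← Finset.sum_add_distrib]
        exact Finset.sum_congr rfl fun i _ => by ring
      linarith
    have hval : x ⬝ᵥ (1 - γ • N).mulVec x = x ⬝ᵥ x - γ * (x ⬝ᵥ N.mulVec x) := by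
      rw [sub_mulVec, one_mulVec, dotProduct_sub, smul_mulVec, dotProduct_smul,
        smul_eq_mul]
    simp only [star_trivial]
    rw [hval]
    nlinarith [mul_nonneg hγ0 (le_of_lt hxx)]
/-- f(π) = μᵀ(I − γ∑ₐπₐPₐ)⁻¹μ is convex on the standard simplex. -/
theorem matrix_fractional_convex_on_simplex {n k : ℕ}
    (P : Fin k → Matrix (Fin n) (Fin n) ℝ)
    (hsymm : ∀ a, (P a).IsSymm)
    (hnonneg : ∀ a i j, 0 ≤ P a i j) (hrow : ∀ a i, ∑ j, P a i j = 1)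
    (γ : ℝ) (hγ0 : 0 ≤ γ) (hγ1 : γ < 1) (μ : Fin n → ℝ) :
    ConvexOn ℝ (stdSimplex ℝ (Fin k))
      (fun π : Fin k → ℝ => μ ⬝ᵥ (1 - γ • ∑ a, π a • P a)⁻¹.mulVec μ) := by
  refine ⟨convex_stdSimplex ℝ (Fin k), ?_⟩
  intro p hp q hq s t hs ht hst
  set Ap : Matrix (Fin n) (Fin n) ℝ := 1 - γ • ∑ a, p a • P a with hAp
  set Aq : Matrix (Fin n) (Fin n) ℝ := 1 - γ • ∑ a, q a • P a with hAq
  set C : Matrix (Fin n) (Fin n) ℝ := 1 - γ • ∑ a, (s • p + t • q) a • P a with hC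
  have hmem : s • p + t • q ∈ stdSimplex ℝ (Fin k) :=
    (convex_stdSimplex ℝ (Fin k)) hp hq hs ht hst
  have hApd : Ap.PosDef := pd_key P hsymm hnonneg hrow γ hγ0 hγ1 p hp
  have hAqd : Aq.PosDef := pd_key P hsymm hnonneg hrow γ hγ0 hγ1 q hq
  have hCd : C.PosDef := pd_key P hsymm hnonneg hrow γ hγ0 hγ1 _ hmem
  have haff : C = s • Ap + t • Aq := by
    rw [hC, hAp, hAq]
    have h1 : ∑ a, (s • p + t • q) a • P a
        = s • (∑ a, p a • P a) + t • (∑ a, q a • P a) := by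
      rw [Finset.smul_sum, Finset.smul_sum, ← Finset.sum_add_distrib]
      refine Finset.sum_congr rfl fun a _ => ?_
      simp [Pi.add_apply, Pi.smul_apply, add_smul, smul_smul]
    rw [h1]
    have h2 : (1 : Matrix (Fin n) (Fin n) ℝ) = s • 1 + t • 1 := by
      rw [← add_smul, hst, one_smul]
    rw [smul_sub, smul_sub, smul_smul, smul_smul, mul_comm s γ, mul_comm t γ,
      ← smul_smul, ← smul_smul]
    rw [smul_add]
    nth_rewrite 1 [h2]
    abel
  set y : Fin n → ℝ := C⁻¹.mulVec μ with hy
  have hCy : C.mulVec y = μ := by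
    rw [hy, mulVec_mulVec, Matrix.mul_nonsing_inv _ hCd.det_pos.ne'.isUnit, one_mulVec]
  have hmid : μ ⬝ᵥ C⁻¹.mulVec μ = 2 * (y ⬝ᵥ μ) - y ⬝ᵥ C.mulVec y := by
    rw [← hy, hCy, dotProduct_comm y μ]; ring
  have hsplit : y ⬝ᵥ C.mulVec y = s * (y ⬝ᵥ Ap.mulVec y) + t * (y ⬝ᵥ Aq.mulVec y) := by
    rw [haff, add_mulVec, smul_mulVec, smul_mulVec, dotProduct_add,
      dotProduct_smul, dotProduct_smul, smul_eq_mul, smul_eq_mul]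
  have hkp := quad_key Ap hApd μ y
  have hkq := quad_key Aq hAqd μ y
  simp only [smul_eq_mul]
  calc μ ⬝ᵥ C⁻¹.mulVec μ
      = s * (2 * (y ⬝ᵥ μ) - y ⬝ᵥ Ap.mulVec y) + t * (2 * (y ⬝ᵥ μ) - y ⬝ᵥ Aq.mulVec y) := by
        rw [hmid, hsplit]; linear_combination (-2 * (y ⬝ᵥ μ)) * hst
    _ ≤ s * (μ ⬝ᵥ Ap⁻¹.mulVec μ) + t * (μ ⬝ᵥ Aq⁻¹.mulVec μ) := by
        have := mul_le_mul_of_nonneg_left hkp hs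
        have := mul_le_mul_of_nonneg_left hkq ht
        linarith
end
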